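/- Let T ⊂ (ℝ^k)^N be a bounded set, with elements t = (t_1, …, t_N), t_i = (t_{i1}, …, t_{ik}) ∈ ℝ^k. Let h_1, …, h_N : ℝ^k → ℝ be such that each h_i is (M_i, ℓ∞)-Lipschitz with h_i(0) = 0. For j ≤ k let T_j = { (t_{1j}, …, t_{Nj}) : (t_1, …, t_N) ∈ T } ⊂ ℝ^N. Let ε_1, …, ε_N be independent Rademacher variables. Then E[ sup_{t ∈ T} | ∑_{i=1}^N ε_i h_i(t_i) | ] ≤ β_k ∑_{j=1}^k E[ sup_{s ∈ T_j} | ∑_{i=1}^N ε_i M_i s_i | ], where β_k = 3^k + 3^{k−1} − 2^k. -/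

import Mathlib

open MeasureTheory ProbabilityTheory
open scoped ENNReal NNReal

noncomputable section Stmt5Aux

/-- sign of a boolean as a real number -/
def rsgn (b : Bool) : ℝ := if b then 1 else -1

@[simp] lemma rsgn_true : rsgn true = 1 := rfl
@[simp] lemma rsgn_false : rsgn false = -1 := rfl
@[simp] lemma rsgn_not (b : Bool) : rsgn (!b) = - rsgn b := by cases b <;> simp [rsgn]
@[simp] lemma abs_rsgn (b : Bool) : |rsgn b| = 1 := by cases b <;> simp [rsgn]
lemma rsgn_add : rsgn true + rsgn false = 0 := by simp

/-- summing a function of one coordinate over the boolean cube -/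
lemma cube_sum_coord {ι : Type*} [Fintype ι] [DecidableEq ι] (j : ι) (f : Bool → ℝ) :
    ∑ η : ι → Bool, f (η j) = 2 ^ (Fintype.card ι - 1) * (f true + f false) := by
  classical
  have hcomp := Equiv.sum_comp (Equiv.funSplitAt j Bool).symm (fun η : ι → Bool => f (η j))
  rw [← hcomp]
  have : ∀ p : Bool × ({ j' // j' ≠ j } → Bool),
      f (((Equiv.funSplitAt j Bool).symm p) j) = f p.1 := by
    intro p
    congr 1
    simp [Equiv.funSplitAt, Equiv.piSplitAt]
  rw [Fintype.sum_congr _ _ this]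
  rw [Fintype.sum_prod_type]
  simp only [Finset.sum_const, Finset.card_univ, nsmul_eq_mul]
  have hcard : (Fintype.card ({ j' // j' ≠ j } → Bool) : ℝ) = 2 ^ (Fintype.card ι - 1) := by
    have := Fintype.card_subtype_compl (fun j' : ι => j' = j)
    simp only [Fintype.card_subtype_eq] at this
    rw [Fintype.card_fun, Fintype.card_bool]
    norm_cast
    congr 1
  rw [Fintype.sum_bool]
  rw [hcard]
  ring

/-- summing (function of coordinate j') * rsgn(coordinate j) over the cube, different coords -/
lemma cube_sum_zero {ι : Type*} [Fintype ι] [DecidableEq ι] {j j' : ι} (hjj : j' ≠ j)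
    (f : Bool → ℝ) :
    ∑ η : ι → Bool, f (η j') * rsgn (η j) = 0 := by
  classical
  have hcomp := Equiv.sum_comp (Equiv.funSplitAt j Bool).symm
    (fun η : ι → Bool => f (η j') * rsgn (η j))
  rw [← hcomp]
  have : ∀ p : Bool × ({ i // i ≠ j } → Bool),
      f (((Equiv.funSplitAt j Bool).symm p) j') * rsgn (((Equiv.funSplitAt j Bool).symm p) j)
        = f (p.2 ⟨j', hjj⟩) * rsgn p.1 := by
    intro p
    have h1 : ((Equiv.funSplitAt j Bool).symm p) j = p.1 := by
      simp [Equiv.funSplitAt, Equiv.piSplitAt]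
    have h2 : ((Equiv.funSplitAt j Bool).symm p) j' = p.2 ⟨j', hjj⟩ := by
      simp [Equiv.funSplitAt, Equiv.piSplitAt, hjj]
    rw [h1, h2]
  rw [Fintype.sum_congr _ _ this]
  rw [Fintype.sum_prod_type]
  rw [Fintype.sum_bool]
  simp only [rsgn_true, rsgn_false, mul_one, mul_neg]
  rw [← Finset.sum_add_distrib]
  simp



/-- the sum over the cube of `if η j' = θ then a else b` -/
lemma cube_sum_ite {k : ℕ} (j' : Fin k) (θ : Bool) (a b : ℝ) :
    ∑ η : Fin k → Bool, (if η j' = θ then a else b) = 2 ^ (k - 1) * (a + b) := by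
  have := cube_sum_coord (ι := Fin k) j' (fun c => if c = θ then a else b)
  simp only [Fintype.card_fin] at this
  rw [this]
  cases θ <;> simp <;> ring

/-- the sum over the cube of `if η j' = θ then rsgn (η j) else 0` -/
lemma cube_sum_ite_rsgn {k : ℕ} (j j' : Fin k) (θ : Bool) :
    ∑ η : Fin k → Bool, (if η j' = θ then rsgn (η j) else 0)
      = if j = j' then 2 ^ (k - 1) * rsgn θ else 0 := by
  by_cases hj : j = j'
  · subst hj
    have := cube_sum_coord (ι := Fin k) j (fun c => if c = θ then rsgn c else 0)
    simp only [Fintype.card_fin] at this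
    have heq : ∀ η : Fin k → Bool,
        (if η j = θ then rsgn (η j) else 0) = (fun c => if c = θ then rsgn c else 0) (η j) :=
      fun η => rfl
    rw [Fintype.sum_congr _ _ heq, this, if_pos rfl]
    cases θ <;> simp
  · have heq : ∀ η : Fin k → Bool,
        (if η j' = θ then rsgn (η j) else 0)
          = (fun c => if c = θ then (1:ℝ) else 0) (η j') * rsgn (η j) := by
      intro η; by_cases hc : η j' = θ <;> simp [hc]
    rw [Fintype.sum_congr _ _ heq, if_neg hj]
    exact cube_sum_zero (Ne.symm hj) (fun c => if c = θ then (1:ℝ) else 0)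

/-- The key two-point (exchange) lemma. -/
lemma step_lemma {X : Type*} [Nonempty X] {k : ℕ} (hk : 0 < k)
    (D F : X → ℝ) (G : Fin k → X → ℝ)
    (hbdd : ∀ η : Fin k → Bool, BddAbove (Set.range fun x => D x + ∑ j, rsgn (η j) * G j x))
    (hbddF : ∀ b : Bool, BddAbove (Set.range fun x => D x + rsgn b * F x))
    (hF : ∀ x y : X, ∃ j, F x - F y ≤ |G j x - G j y|) :
    ∑ η : Fin k → Bool, (⨆ x, (D x + rsgn (η ⟨0, hk⟩) * F x)) ≤
      ∑ η : Fin k → Bool, ⨆ x, (D x + ∑ j, rsgn (η j) * G j x) := by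
  set j0 : Fin k := ⟨0, hk⟩
  set q : Bool → ℝ := fun b => ⨆ x, (D x + rsgn b * F x) with hq
  have hL : ∑ η : Fin k → Bool, (⨆ x, (D x + rsgn (η j0) * F x))
      = 2 ^ (k - 1) * (q true + q false) := by
    have := cube_sum_coord (ι := Fin k) j0 q
    simpa [Fintype.card_fin] using this
  rw [hL]
  apply le_of_forall_pos_le_add
  intro ε hε
  set δ : ℝ := ε / (2 ^ k) with hδdef
  have h2k : (0:ℝ) < 2 ^ k := by positivity
  have hδ : 0 < δ := by positivity
  -- approximate maximizers
  obtain ⟨x, hx⟩ : ∃ x, q true - δ < D x + rsgn true * F x := by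
    apply exists_lt_of_lt_ciSup
    exact sub_lt_self _ hδ
  obtain ⟨y, hy⟩ : ∃ y, q false - δ < D y + rsgn false * F y := by
    apply exists_lt_of_lt_ciSup
    exact sub_lt_self _ hδ
  simp only [rsgn_true, rsgn_false, one_mul, neg_one_mul] at hx hy
  set Δ : Fin k → ℝ := fun j => G j x - G j y with hΔ
  obtain ⟨js, -, hjs⟩ := Finset.exists_max_image Finset.univ (fun j => |Δ j|)
    ⟨j0, Finset.mem_univ _⟩
  set θ : Bool := decide (0 ≤ Δ js) with hθdef
  have hθ : rsgn θ * Δ js = |Δ js| := by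
    by_cases h0 : 0 ≤ Δ js
    · simp [hθdef, h0, rsgn, abs_of_nonneg h0]
    · simp [hθdef, h0, rsgn, abs_of_neg (lt_of_not_ge h0)]
  -- lower bound the right-hand side
  have key : ∀ η : Fin k → Bool,
      (if η js = θ then D x + ∑ j, rsgn (η j) * G j x else D y + ∑ j, rsgn (η j) * G j y)
        ≤ ⨆ z, (D z + ∑ j, rsgn (η j) * G j z) := by
    intro η
    by_cases hη : η js = θ
    · rw [if_pos hη]; exact le_ciSup (hbdd η) x
    · rw [if_neg hη]; exact le_ciSup (hbdd η) y
  have hsum : ∑ η : Fin k → Bool,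
      (if η js = θ then D x + ∑ j, rsgn (η j) * G j x else D y + ∑ j, rsgn (η j) * G j y)
      = 2 ^ (k - 1) * (D x + D y + |Δ js|) := by
    have expand : ∀ η : Fin k → Bool,
        (if η js = θ then D x + ∑ j, rsgn (η j) * G j x else D y + ∑ j, rsgn (η j) * G j y)
        = (if η js = θ then D x else D y)
          + ∑ j, ((if η js = θ then rsgn (η j) else 0) * G j x
                  + (if η js = !θ then rsgn (η j) else 0) * G j y) := by
      intro η
      by_cases hη : η js = θ
      · have : ¬ (η js = !θ) := by simp [hη]
        simp [hη, this]
      · have : η js = !θ := by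
          cases hθb : θ <;> cases hηb : η js <;> simp_all
        simp [hη, this]
    rw [Fintype.sum_congr _ _ expand]
    rw [Finset.sum_add_distrib]
    rw [cube_sum_ite js θ (D x) (D y)]
    have swap : ∑ η : Fin k → Bool, ∑ j, ((if η js = θ then rsgn (η j) else 0) * G j x
                  + (if η js = !θ then rsgn (η j) else 0) * G j y)
        = ∑ j, ((∑ η : Fin k → Bool, (if η js = θ then rsgn (η j) else 0)) * G j x
                  + (∑ η : Fin k → Bool, (if η js = !θ then rsgn (η j) else 0)) * G j y) := by
      rw [Finset.sum_comm]
      congr 1; ext j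
      rw [Finset.sum_add_distrib, Finset.sum_mul, Finset.sum_mul]
    rw [swap]
    have term : ∀ j : Fin k, ((∑ η : Fin k → Bool, (if η js = θ then rsgn (η j) else 0)) * G j x
                  + (∑ η : Fin k → Bool, (if η js = !θ then rsgn (η j) else 0)) * G j y)
        = if j = js then 2 ^ (k-1) * rsgn θ * G j x - 2 ^ (k-1) * rsgn θ * G j y else 0 := by
      intro j
      rw [cube_sum_ite_rsgn j js θ, cube_sum_ite_rsgn j js (!θ)]
      by_cases hj : j = js
      · simp [hj]; ring
      · simp [hj]
    rw [Fintype.sum_congr _ _ term, Finset.sum_ite_eq' Finset.univ js _]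
    simp only [Finset.mem_univ, if_pos]
    have : (2:ℝ) ^ (k-1) * rsgn θ * G js x - 2 ^ (k-1) * rsgn θ * G js y
        = 2 ^ (k-1) * (rsgn θ * Δ js) := by rw [hΔ]; ring
    rw [this, hθ]
    ring
  have hRge : 2 ^ (k - 1) * (D x + D y + |Δ js|)
      ≤ ∑ η : Fin k → Bool, ⨆ z, (D z + ∑ j, rsgn (η j) * G j z) := by
    rw [← hsum]
    exact Finset.sum_le_sum fun η _ => key η
  -- compare with left-hand side
  obtain ⟨jF, hjF⟩ := hF x y
  have hFle : F x - F y ≤ |Δ js| := le_trans hjF (hjs jF (Finset.mem_univ _))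
  have hqq : q true + q false ≤ D x + D y + |Δ js| + 2 * δ := by
    have := hx; have := hy
    nlinarith [hFle]
  calc 2 ^ (k-1) * (q true + q false)
      ≤ 2 ^ (k-1) * (D x + D y + |Δ js| + 2 * δ) := by
        apply mul_le_mul_of_nonneg_left hqq (by positivity)
    _ = 2 ^ (k-1) * (D x + D y + |Δ js|) + 2 ^ (k-1) * 2 * δ := by ring
    _ ≤ (∑ η : Fin k → Bool, ⨆ z, (D z + ∑ j, rsgn (η j) * G j z)) + ε := by
        have hpow : (2:ℝ) ^ (k-1) * 2 = 2 ^ k := by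
          rw [← pow_succ]
          congr 1
          omega
        have : (2:ℝ) ^ (k-1) * 2 * δ = ε := by
          rw [hpow, hδdef]; field_simp
        rw [this]
        exact add_le_add hRge le_rfl

section Hybrid

variable {N k : ℕ} (hk : 0 < k) (T0 : Set (Fin N → Fin k → ℝ))
  (M : Fin N → ℝ) (h : Fin N → (Fin k → ℝ) → ℝ)

/-- the mixed process, where coordinates in `A` have been replaced by the linear comparison -/
def mix (A : Finset (Fin N)) (τ : Fin N → Fin k → Bool) (t : Fin N → Fin k → ℝ) : ℝ :=
  ∑ i, if i ∈ A then (∑ j, rsgn (τ i j) * (M i * t i j)) else rsgn (τ i ⟨0, hk⟩) * h i (t i)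

lemma hybrid [Nonempty ↥T0] (K : ℝ)
    (hKh : ∀ i : Fin N, ∀ t ∈ T0, |h i (t i)| ≤ K)
    (hKM : ∀ (i : Fin N) (j : Fin k), ∀ t ∈ T0, |M i * t i j| ≤ K)
    (hcomp : ∀ (i : Fin N), ∀ s ∈ T0, ∀ t ∈ T0,
      ∃ j, h i (s i) - h i (t i) ≤ |M i * s i j - M i * t i j|) :
    ∑ τ : Fin N → Fin k → Bool, ⨆ t : T0, (∑ i, rsgn (τ i ⟨0, hk⟩) * h i (t.1 i)) ≤
      ∑ τ : Fin N → Fin k → Bool, ⨆ t : T0, (∑ i, ∑ j, rsgn (τ i j) * (M i * t.1 i j)) := by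
  classical
  -- master boundedness of the mixed process
  have master : ∀ (A : Finset (Fin N)) (τ : Fin N → Fin k → Bool),
      BddAbove (Set.range fun t : T0 => mix hk M h A τ t.1) := by
    intro A τ
    refine ⟨∑ i : Fin N, (k * K + K), ?_⟩
    rintro _ ⟨t, rfl⟩
    unfold mix
    refine Finset.sum_le_sum fun i _ => ?_
    have hK0 : 0 ≤ K := le_trans (abs_nonneg _) (hKh i t.1 t.2)
    by_cases hi : i ∈ A
    · rw [if_pos hi]
      calc ∑ j, rsgn (τ i j) * (M i * t.1 i j) ≤ ∑ j : Fin k, K := by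
            refine Finset.sum_le_sum fun j _ => ?_
            calc rsgn (τ i j) * (M i * t.1 i j) ≤ |rsgn (τ i j) * (M i * t.1 i j)| := le_abs_self _
              _ = |M i * t.1 i j| := by rw [abs_mul, abs_rsgn, one_mul]
              _ ≤ K := hKM i j t.1 t.2
        _ = k * K := by simp [mul_comm]
        _ ≤ k * K + K := by linarith
    · rw [if_neg hi]
      calc rsgn (τ i ⟨0, hk⟩) * h i (t.1 i) ≤ |rsgn (τ i ⟨0, hk⟩) * h i (t.1 i)| := le_abs_self _
        _ = |h i (t.1 i)| := by rw [abs_mul, abs_rsgn, one_mul]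
        _ ≤ K := hKh i t.1 t.2
        _ ≤ k * K + K := by nlinarith [hK0]
  -- the quantity W
  set W : Finset (Fin N) → ℝ :=
    fun A => ∑ τ : Fin N → Fin k → Bool, ⨆ t : T0, mix hk M h A τ t.1 with hW
  -- single replacement step
  have step : ∀ (A : Finset (Fin N)) (i₀ : Fin N), i₀ ∉ A → W A ≤ W (insert i₀ A) := by
    intro A i₀ hi₀
    set e := Equiv.piSplitAt i₀ (fun _ : Fin N => Fin k → Bool) with he
    have hdecomp : ∀ (B : Finset (Fin N)) (τ : Fin N → Fin k → Bool),
        W B = ∑ p : (Fin k → Bool) × ({ i // i ≠ i₀ } → Fin k → Bool),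
          ⨆ t : T0, mix hk M h B (e.symm p) t.1 := by
      intro B τ
      rw [hW]
      exact (Equiv.sum_comp e.symm (fun τ => ⨆ t : T0, mix hk M h B τ t.1)).symm
    rw [hdecomp A (fun _ _ => true), hdecomp (insert i₀ A) (fun _ _ => true)]
    rw [Fintype.sum_prod_type_right, Fintype.sum_prod_type_right]
    refine Finset.sum_le_sum fun w _ => ?_
    -- the fixed part
    set D : ↥T0 → ℝ := fun t => ∑ i ∈ Finset.univ.erase i₀,
      (if i ∈ A then (∑ j, rsgn ((e.symm (fun _ => true, w)) i j) * (M i * t.1 i j))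
        else rsgn ((e.symm (fun _ => true, w)) i ⟨0, hk⟩) * h i (t.1 i)) with hD
    have hval : ∀ (r : Fin k → Bool) (i : Fin N) (hi : i ≠ i₀),
        (e.symm (r, w)) i = w ⟨i, hi⟩ := by
      intro r i hi
      simp [he, Equiv.piSplitAt, hi]
    have hvali₀ : ∀ r : Fin k → Bool, (e.symm (r, w)) i₀ = r := by
      intro r; simp [he, Equiv.piSplitAt]
    have hDeq : ∀ (r : Fin k → Bool) (B : Finset (Fin N)) (t : ↥T0),
        (∑ i ∈ Finset.univ.erase i₀,
          (if i ∈ B then (∑ j, rsgn ((e.symm (r, w)) i j) * (M i * t.1 i j))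
            else rsgn ((e.symm (r, w)) i ⟨0, hk⟩) * h i (t.1 i)))
        = ∑ i ∈ Finset.univ.erase i₀,
          (if i ∈ B then (∑ j, rsgn ((e.symm (fun _ => true, w)) i j) * (M i * t.1 i j))
            else rsgn ((e.symm (fun _ => true, w)) i ⟨0, hk⟩) * h i (t.1 i)) := by
      intro r B t
      refine Finset.sum_congr rfl fun i hi => ?_
      have hne : i ≠ i₀ := Finset.ne_of_mem_erase hi
      rw [hval r i hne, hval (fun _ => true) i hne]
    have hmixA : ∀ (r : Fin k → Bool) (t : ↥T0),
        mix hk M h A (e.symm (r, w)) t.1 = D t + rsgn (r ⟨0, hk⟩) * h i₀ (t.1 i₀) := by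
      intro r t
      unfold mix
      rw [← Finset.add_sum_erase _ _ (Finset.mem_univ i₀)]
      rw [if_neg hi₀, hvali₀ r, hDeq r A t, add_comm]
    have hmixI : ∀ (r : Fin k → Bool) (t : ↥T0),
        mix hk M h (insert i₀ A) (e.symm (r, w)) t.1
          = D t + ∑ j, rsgn (r j) * (M i₀ * t.1 i₀ j) := by
      intro r t
      unfold mix
      rw [← Finset.add_sum_erase _ _ (Finset.mem_univ i₀)]
      rw [if_pos (Finset.mem_insert_self i₀ A), hvali₀ r, add_comm]
      congr 1
      have : ∀ i ∈ Finset.univ.erase i₀,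
          (if i ∈ insert i₀ A then (∑ j, rsgn ((e.symm (r, w)) i j) * (M i * t.1 i j))
            else rsgn ((e.symm (r, w)) i ⟨0, hk⟩) * h i (t.1 i))
          = (if i ∈ A then (∑ j, rsgn ((e.symm (r, w)) i j) * (M i * t.1 i j))
            else rsgn ((e.symm (r, w)) i ⟨0, hk⟩) * h i (t.1 i)) := by
        intro i hi
        have hne : i ≠ i₀ := Finset.ne_of_mem_erase hi
        simp [Finset.mem_insert, hne]
      rw [Finset.sum_congr rfl this, hDeq r A t]
    calc ∑ r : Fin k → Bool, ⨆ t : T0, mix hk M h A (e.symm (r, w)) t.1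
        = ∑ r : Fin k → Bool, ⨆ t : T0, (D t + rsgn (r ⟨0, hk⟩) * h i₀ (t.1 i₀)) := by
          refine Finset.sum_congr rfl fun r _ => ?_
          exact congrArg _ (funext fun t => hmixA r t)
      _ ≤ ∑ r : Fin k → Bool, ⨆ t : T0, (D t + ∑ j, rsgn (r j) * (M i₀ * t.1 i₀ j)) := by
          refine step_lemma hk D (fun t : ↥T0 => h i₀ (t.1 i₀))
            (fun j (t : ↥T0) => M i₀ * t.1 i₀ j) ?_ ?_ ?_
          · intro η
            have : (fun t : ↥T0 => D t + ∑ j, rsgn (η j) * (M i₀ * t.1 i₀ j))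
                = fun t : ↥T0 => mix hk M h (insert i₀ A) (e.symm (η, w)) t.1 :=
              funext fun t => (hmixI η t).symm
            rw [this]
            exact master _ _
          · intro b
            have : (fun t : ↥T0 => D t + rsgn b * h i₀ (t.1 i₀))
                = fun t : ↥T0 => mix hk M h A (e.symm ((fun _ => b), w)) t.1 :=
              funext fun t => (hmixA (fun _ => b) t).symm
            rw [this]
            exact master _ _
          · intro s t
            exact hcomp i₀ s.1 s.2 t.1 t.2
      _ = ∑ r : Fin k → Bool, ⨆ t : T0, mix hk M h (insert i₀ A) (e.symm (r, w)) t.1 := by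
          refine Finset.sum_congr rfl fun r _ => ?_
          exact congrArg _ (funext fun t => (hmixI r t).symm)
  -- induction
  have main : ∀ A : Finset (Fin N), W ∅ ≤ W A := by
    intro A
    induction A using Finset.induction_on with
    | empty => exact le_refl _
    | insert _ _ hnotmem ih => exact le_trans ih (step _ _ hnotmem)
  have hWempty : W ∅ = ∑ τ : Fin N → Fin k → Bool,
      ⨆ t : T0, (∑ i, rsgn (τ i ⟨0, hk⟩) * h i (t.1 i)) := by
    rw [hW]; unfold mix; simp
  have hWuniv : W Finset.univ = ∑ τ : Fin N → Fin k → Bool,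
      ⨆ t : T0, (∑ i, ∑ j, rsgn (τ i j) * (M i * t.1 i j)) := by
    rw [hW]; unfold mix; simp
  calc ∑ τ : Fin N → Fin k → Bool, ⨆ t : T0, (∑ i, rsgn (τ i ⟨0, hk⟩) * h i (t.1 i))
      = W ∅ := hWempty.symm
    _ ≤ W Finset.univ := main _
    _ = _ := hWuniv

end Hybrid

/-- marginalizing the boolean cube over all but one column -/
lemma marg {N k : ℕ} (j : Fin k) (g : (Fin N → Bool) → ℝ) :
    ∑ τ : Fin N → Fin k → Bool, g (fun i => τ i j)
      = 2 ^ ((k-1) * N) * ∑ σ : Fin N → Bool, g σ := by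
  classical
  set e1 : (Fin N → Fin k → Bool) ≃ (Fin N → Bool × ({ j' // j' ≠ j } → Bool)) :=
    Equiv.piCongrRight (fun _ : Fin N => Equiv.funSplitAt j Bool) with he1
  set e2 : (Fin N → Bool × ({ j' // j' ≠ j } → Bool))
      ≃ (Fin N → Bool) × (Fin N → ({ j' // j' ≠ j } → Bool)) :=
    Equiv.arrowProdEquivProdArrow _ _ _ with he2
  set E : (Fin N → Fin k → Bool) ≃ (Fin N → Bool) × (Fin N → ({ j' // j' ≠ j } → Bool)) :=
    e1.trans e2 with hE
  have hcomp := Equiv.sum_comp E.symm (fun τ : Fin N → Fin k → Bool => g (fun i => τ i j))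
  rw [← hcomp]
  have hcol : ∀ p : (Fin N → Bool) × (Fin N → ({ j' // j' ≠ j } → Bool)),
      (fun i => (E.symm p) i j) = p.1 := by
    intro p
    funext i
    simp [hE, he1, he2, Equiv.arrowProdEquivProdArrow, Equiv.funSplitAt, Equiv.piSplitAt,
      Equiv.piCongrRight]
  have : ∀ p : (Fin N → Bool) × (Fin N → ({ j' // j' ≠ j } → Bool)),
      g (fun i => (E.symm p) i j) = g p.1 := fun p => congrArg g (hcol p)
  rw [Fintype.sum_congr _ _ this, Fintype.sum_prod_type]
  simp only [Finset.sum_const, Finset.card_univ, nsmul_eq_mul]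
  rw [← Finset.mul_sum]
  have hcard : (Fintype.card (Fin N → ({ j' // j' ≠ j } → Bool)) : ℝ) = 2 ^ ((k-1)*N) := by
    rw [Fintype.card_fun, Fintype.card_fun, Fintype.card_bool]
    have hsub : Fintype.card { j' // j' ≠ j } = k - 1 := by
      have := Fintype.card_subtype_compl (fun j' : Fin k => j' = j)
      simp only [Fintype.card_subtype_eq, Fintype.card_fin] at this
      exact this
    rw [hsub, ← pow_mul]
    norm_cast
    rw [Fintype.card_fin]
  rw [hcard]

section SupLemmas

lemma bdd_range_of_le {X : Type*} {f : X → ℝ} {B : ℝ} (hf : ∀ x, f x ≤ B) :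
    BddAbove (Set.range f) := ⟨B, by rintro _ ⟨x, rfl⟩; exact hf x⟩

lemma sup_abs_le {α : Type*} (T : Set α) (z : α) (φ : α → ℝ) [Nonempty ↥T] (hφz : φ z = 0)
    (hb1 : BddAbove (Set.range fun t : ↥(insert z T) => φ t.1))
    (hb2 : BddAbove (Set.range fun t : ↥(insert z T) => -φ t.1)) :
    (⨆ t : ↥T, |φ t.1|) ≤ (⨆ t : ↥(insert z T), φ t.1) + (⨆ t : ↥(insert z T), -φ t.1) := by
  haveI : Nonempty ↥(insert z T) := ⟨⟨z, Set.mem_insert _ _⟩⟩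
  refine ciSup_le fun t => ?_
  have h1 : φ t.1 ≤ ⨆ t : ↥(insert z T), φ t.1 :=
    le_ciSup hb1 (⟨t.1, Set.mem_insert_of_mem z t.2⟩ : ↥(insert z T))
  have h2 : -φ t.1 ≤ ⨆ t : ↥(insert z T), -φ t.1 :=
    le_ciSup hb2 (⟨t.1, Set.mem_insert_of_mem z t.2⟩ : ↥(insert z T))
  have h1z : (0:ℝ) ≤ ⨆ t : ↥(insert z T), φ t.1 := by
    have := le_ciSup hb1 (⟨z, Set.mem_insert _ _⟩ : ↥(insert z T))
    rw [hφz] at this; exact this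
  have h2z : (0:ℝ) ≤ ⨆ t : ↥(insert z T), -φ t.1 := by
    have := le_ciSup hb2 (⟨z, Set.mem_insert _ _⟩ : ↥(insert z T))
    rw [hφz] at this; simpa using this
  rcases abs_cases (φ t.1) with ⟨heq, -⟩ | ⟨heq, -⟩ <;> rw [heq]
  · linarith
  · linarith

lemma sup_insert_le_sup_abs {α : Type*} (T : Set α) (z : α) (φ : α → ℝ) [Nonempty ↥T]
    (hφz : φ z = 0)
    (hb : BddAbove (Set.range fun t : ↥T => |φ t.1|)) :
    (⨆ t : ↥(insert z T), φ t.1) ≤ ⨆ t : ↥T, |φ t.1| := by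
  haveI : Nonempty ↥(insert z T) := ⟨⟨z, Set.mem_insert _ _⟩⟩
  obtain ⟨t1⟩ := (inferInstance : Nonempty ↥T)
  have hnn : (0:ℝ) ≤ ⨆ t : ↥T, |φ t.1| := le_trans (abs_nonneg _) (le_ciSup hb t1)
  refine ciSup_le fun t => ?_
  rcases t.2 with ht | ht
  · rw [show t.1 = z from ht, hφz]; exact hnn
  · exact le_trans (le_abs_self _) (le_ciSup hb (⟨t.1, ht⟩ : ↥T))

lemma iSup_finset_sum_le {X : Type*} [Nonempty X] {ι : Type*} (s : Finset ι) (f : ι → X → ℝ)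
    (hb : ∀ i, BddAbove (Set.range (f i))) :
    (⨆ x, ∑ i ∈ s, f i x) ≤ ∑ i ∈ s, ⨆ x, f i x :=
  ciSup_le fun x => Finset.sum_le_sum fun i _ => le_ciSup (hb i) x

lemma sum_bool_flip {N : ℕ} (g : (Fin N → Bool) → ℝ) :
    ∑ σ : Fin N → Bool, g (fun i => !(σ i)) = ∑ σ : Fin N → Bool, g σ := by
  have hinv : Function.Involutive (fun (σ : Fin N → Bool) (i : Fin N) => !(σ i)) := by
    intro σ; funext i; simp
  exact Equiv.sum_comp hinv.toPerm g

lemma meas_sup {N : ℕ} {α : Type*} (T : Set α) [Nonempty ↥T] (c : Fin N → α → ℝ) (K : ℝ)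
    (hK : ∀ i, ∀ t ∈ T, |c i t| ≤ K) :
    Measurable fun x : Fin N → ℝ => ⨆ t : ↥T, |∑ i, x i * c i t.1| := by
  set f : (Fin N → ℝ) → ℝ := fun x => ⨆ t : ↥T, |∑ i, x i * c i t.1| with hf
  have hb : ∀ x : Fin N → ℝ, BddAbove (Set.range fun t : ↥T => |∑ i, x i * c i t.1|) := by
    intro x
    refine bdd_range_of_le (B := ∑ i, |x i| * K) fun t => ?_
    calc |∑ i, x i * c i t.1| ≤ ∑ i, |x i * c i t.1| := Finset.abs_sum_le_sum_abs _ _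
      _ ≤ ∑ i, |x i| * K := by
          refine Finset.sum_le_sum fun i _ => ?_
          rw [abs_mul]
          exact mul_le_mul_of_nonneg_left (hK i t.1 t.2) (abs_nonneg _)
  have hlip : ∀ x y : Fin N → ℝ, f x ≤ f y + (N * K) * dist x y := by
    intro x y
    refine ciSup_le fun t => ?_
    have hstep : |∑ i, x i * c i t.1| ≤ |∑ i, y i * c i t.1| + (N * K) * dist x y := by
      have hdiff : |∑ i, x i * c i t.1| - |∑ i, y i * c i t.1|
          ≤ |∑ i, (x i - y i) * c i t.1| := by
        have := abs_sub_abs_le_abs_sub (∑ i, x i * c i t.1) (∑ i, y i * c i t.1)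
        rw [← Finset.sum_sub_distrib] at this
        simpa [sub_mul] using this
      have hbound : |∑ i, (x i - y i) * c i t.1| ≤ (N * K) * dist x y := by
        calc |∑ i, (x i - y i) * c i t.1| ≤ ∑ i, |(x i - y i) * c i t.1| :=
              Finset.abs_sum_le_sum_abs _ _
          _ ≤ ∑ i : Fin N, K * dist x y := by
              refine Finset.sum_le_sum fun i _ => ?_
              rw [abs_mul]
              have h1 : |x i - y i| ≤ dist x y := by
                rw [← Real.dist_eq]
                exact dist_le_pi_dist x y i
              have hK0 : 0 ≤ K := le_trans (abs_nonneg _) (hK i t.1 t.2)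
              calc |x i - y i| * |c i t.1| ≤ |x i - y i| * K :=
                    mul_le_mul_of_nonneg_left (hK i t.1 t.2) (abs_nonneg _)
                _ ≤ dist x y * K := mul_le_mul_of_nonneg_right h1 hK0
                _ = K * dist x y := mul_comm _ _
          _ = (N * K) * dist x y := by
              rw [Finset.sum_const, Finset.card_univ, Fintype.card_fin, nsmul_eq_mul]; ring
      linarith
    exact le_trans hstep (add_le_add (le_ciSup (hb y) t) le_rfl)
  have hcont : Continuous f := by
    have hL : LipschitzWith (Real.toNNReal (N * K)) f := by
      apply LipschitzWith.of_dist_le_mul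
      intro x y
      have h1 := hlip x y
      have h2 := hlip y x
      rw [dist_comm y x] at h2
      have h3 : (N * K) * dist x y ≤ (Real.toNNReal (N * K) : ℝ) * dist x y :=
        mul_le_mul_of_nonneg_right (Real.le_coe_toNNReal _) dist_nonneg
      rw [Real.dist_eq, abs_le]
      constructor <;> linarith
    exact hL.continuous
  exact hcont.measurable

end SupLemmas

section MeasurePart

variable {Ω : Type*} [MeasurableSpace Ω] (μ : Measure Ω) [IsProbabilityMeasure μ]

lemma rad_map {ε : Ω → ℝ} (hm : Measurable ε)
    (hrad : μ {ω | ε ω = 1} = 1/2 ∧ μ {ω | ε ω = -1} = 1/2) :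
    μ.map ε = (2:ℝ≥0∞)⁻¹ • Measure.dirac (1:ℝ) + (2:ℝ≥0∞)⁻¹ • Measure.dirac (-1:ℝ) := by
  classical
  ext s hs
  rw [Measure.map_apply hm hs]
  have hPm : MeasurableSet (ε ⁻¹' {1}) := hm (measurableSet_singleton _)
  have hQm : MeasurableSet (ε ⁻¹' {-1}) := hm (measurableSet_singleton _)
  have hP : μ (ε ⁻¹' {1}) = 2⁻¹ := by
    rw [show ε ⁻¹' {1} = {ω | ε ω = 1} from rfl, hrad.1, one_div]
  have hQ : μ (ε ⁻¹' {-1}) = 2⁻¹ := by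
    rw [show ε ⁻¹' {-1} = {ω | ε ω = -1} from rfl, hrad.2, one_div]
  have hdisj : Disjoint (ε ⁻¹' {1}) (ε ⁻¹' {-1}) :=
    Disjoint.preimage ε (by norm_num : Disjoint ({1} : Set ℝ) {-1})
  have hPQ : μ (ε ⁻¹' {1} ∪ ε ⁻¹' {-1}) = 1 := by
    rw [measure_union hdisj hQm, hP, hQ, ENNReal.inv_two_add_inv_two]
  have hcompl : μ (ε ⁻¹' {1} ∪ ε ⁻¹' {-1})ᶜ = 0 := by
    rw [measure_compl (hPm.union hQm) (measure_ne_top _ _), hPQ, measure_univ, tsub_self]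
  have hsplit : μ (ε ⁻¹' s)
      = μ (ε ⁻¹' s ∩ ε ⁻¹' {1}) + μ (ε ⁻¹' s ∩ ε ⁻¹' {-1}) := by
    have h1 : μ (ε ⁻¹' s) = μ (ε ⁻¹' s ∩ (ε ⁻¹' {1} ∪ ε ⁻¹' {-1}))
        + μ (ε ⁻¹' s \ (ε ⁻¹' {1} ∪ ε ⁻¹' {-1})) :=
      (measure_inter_add_diff _ (hPm.union hQm)).symm
    have h2 : μ (ε ⁻¹' s \ (ε ⁻¹' {1} ∪ ε ⁻¹' {-1})) = 0 :=
      measure_mono_null (Set.diff_subset_compl _ _) hcompl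
    rw [h1, h2, add_zero, Set.inter_union_distrib_left,
      measure_union (hdisj.mono Set.inter_subset_right Set.inter_subset_right)
        ((hm hs).inter hQm)]
  have hP' : ε ⁻¹' s ∩ ε ⁻¹' {1} = if (1:ℝ) ∈ s then ε ⁻¹' {1} else ∅ := by
    rw [← Set.preimage_inter]
    by_cases h1 : (1:ℝ) ∈ s
    · rw [if_pos h1, Set.inter_eq_right.mpr (Set.singleton_subset_iff.mpr h1)]
    · rw [if_neg h1, Set.inter_singleton_eq_empty.mpr h1, Set.preimage_empty]
  have hQ' : ε ⁻¹' s ∩ ε ⁻¹' {-1} = if (-1:ℝ) ∈ s then ε ⁻¹' {-1} else ∅ := by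
    rw [← Set.preimage_inter]
    by_cases h1 : (-1:ℝ) ∈ s
    · rw [if_pos h1, Set.inter_eq_right.mpr (Set.singleton_subset_iff.mpr h1)]
    · rw [if_neg h1, Set.inter_singleton_eq_empty.mpr h1, Set.preimage_empty]
  rw [hsplit, hP', hQ']
  rw [Measure.add_apply, Measure.smul_apply, Measure.smul_apply,
    Measure.dirac_apply' _ hs, Measure.dirac_apply' _ hs]
  by_cases h1 : (1:ℝ) ∈ s <;> by_cases h2 : (-1:ℝ) ∈ s <;>
    simp [h1, h2, hP, hQ, Set.indicator_apply, smul_eq_mul]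

lemma map_joint {N : ℕ} (ε : Fin N → Ω → ℝ) (hεmeas : ∀ i, Measurable (ε i))
    (hεindep : iIndepFun ε μ) :
    μ.map (fun ω i => ε i ω) = Measure.pi (fun i => μ.map (ε i)) := by
  haveI : ∀ i, IsProbabilityMeasure (μ.map (ε i)) :=
    fun i => Measure.isProbabilityMeasure_map (hεmeas i).aemeasurable
  have hX : Measurable (fun ω (i : Fin N) => ε i ω) := measurable_pi_lambda _ hεmeas
  refine (Measure.pi_eq fun s hs => ?_).symm
  rw [Measure.map_apply hX (MeasurableSet.univ_pi hs)]
  have hpre : (fun ω (i : Fin N) => ε i ω) ⁻¹' (Set.univ.pi s) = ⋂ i, ε i ⁻¹' s i := by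
    ext ω
    simp [Set.mem_univ_pi, Set.mem_iInter]
  rw [hpre]
  have hinter : (⋂ i, ε i ⁻¹' s i) = ⋂ i ∈ (Finset.univ : Finset (Fin N)), ε i ⁻¹' s i := by
    simp
  rw [hinter, hεindep.measure_inter_preimage_eq_mul Finset.univ (fun i _ => hs i)]
  exact Finset.prod_congr rfl fun i _ => (Measure.map_apply (hεmeas i) (hs i)).symm

lemma pi_rad_eq_sum {N : ℕ} :
    Measure.pi (fun _ : Fin N =>
        (2:ℝ≥0∞)⁻¹ • Measure.dirac (1:ℝ) + (2:ℝ≥0∞)⁻¹ • Measure.dirac (-1:ℝ))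
      = ∑ σ : Fin N → Bool, (((2:ℝ≥0∞) ^ N)⁻¹ • Measure.dirac (fun i => rsgn (σ i))) := by
  classical
  haveI : IsProbabilityMeasure
      ((2:ℝ≥0∞)⁻¹ • Measure.dirac (1:ℝ) + (2:ℝ≥0∞)⁻¹ • Measure.dirac (-1:ℝ)) := by
    constructor
    rw [Measure.add_apply, Measure.smul_apply, Measure.smul_apply, measure_univ]
    simp [ENNReal.inv_two_add_inv_two]
  refine Measure.pi_eq fun s hs => ?_
  rw [Measure.finset_sum_apply]
  have hterm : ∀ σ : Fin N → Bool,
      (((2:ℝ≥0∞) ^ N)⁻¹ • Measure.dirac (fun i => rsgn (σ i))) (Set.univ.pi s)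
        = ((2:ℝ≥0∞))⁻¹ ^ N * ∏ i, (if rsgn (σ i) ∈ s i then 1 else 0) := by
    intro σ
    rw [Measure.smul_apply, Measure.dirac_apply' _ (MeasurableSet.univ_pi hs)]
    rw [Set.indicator_apply]
    have : ((fun i => rsgn (σ i)) ∈ Set.univ.pi s) ↔ ∀ i, rsgn (σ i) ∈ s i := by
      simp [Set.mem_univ_pi]
    rw [← ENNReal.inv_pow]
    by_cases hmem : ∀ i, rsgn (σ i) ∈ s i
    · rw [if_pos (this.mpr hmem), Fintype.prod_boole, if_pos hmem]
      simp
    · rw [if_neg (fun hh => hmem (this.mp hh)), Fintype.prod_boole, if_neg hmem]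
      simp
  rw [Finset.sum_congr rfl fun σ _ => hterm σ]
  have hfac : ∀ i : Fin N,
      ((2:ℝ≥0∞)⁻¹ • Measure.dirac (1:ℝ) + (2:ℝ≥0∞)⁻¹ • Measure.dirac (-1:ℝ)) (s i)
        = ∑ b : Bool, (2:ℝ≥0∞)⁻¹ * (if rsgn b ∈ s i then 1 else 0) := by
    intro i
    rw [Measure.add_apply, Measure.smul_apply, Measure.smul_apply,
      Measure.dirac_apply' _ (hs i), Measure.dirac_apply' _ (hs i), Fintype.sum_bool]
    simp [Set.indicator_apply, smul_eq_mul]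
    by_cases h1 : (1:ℝ) ∈ s i <;> by_cases h2 : (-1:ℝ) ∈ s i <;> simp [h1, h2]
  rw [Finset.prod_congr rfl fun i _ => hfac i]
  have := Finset.prod_univ_sum (fun _ : Fin N => (Finset.univ : Finset Bool))
    (fun i b => (2:ℝ≥0∞)⁻¹ * (if rsgn b ∈ s i then 1 else 0))
  rw [this, Fintype.piFinset_univ]
  refine Finset.sum_congr rfl fun σ _ => ?_
  rw [Finset.prod_mul_distrib, Finset.prod_const, Finset.card_univ, Fintype.card_fin]

lemma key_avg {N : ℕ} (ε : Fin N → Ω → ℝ)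
    (hεmeas : ∀ i, Measurable (ε i))
    (hεrad : ∀ i, μ {ω | ε i ω = 1} = 1/2 ∧ μ {ω | ε i ω = -1} = 1/2)
    (hεindep : iIndepFun ε μ)
    (f : (Fin N → ℝ) → ℝ) (hf : Measurable f) :
    ∫ ω, f (fun i => ε i ω) ∂μ
      = ((2:ℝ) ^ N)⁻¹ * ∑ σ : Fin N → Bool, f (fun i => rsgn (σ i)) := by
  classical
  have hX : Measurable (fun ω (i : Fin N) => ε i ω) := measurable_pi_lambda _ hεmeas
  have h1 : ∫ ω, f (fun i => ε i ω) ∂μ = ∫ x, f x ∂(μ.map (fun ω i => ε i ω)) :=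
    (integral_map hX.aemeasurable hf.aestronglyMeasurable).symm
  have h2 : μ.map (fun ω i => ε i ω)
      = ∑ σ : Fin N → Bool, (((2:ℝ≥0∞) ^ N)⁻¹ • Measure.dirac (fun i => rsgn (σ i))) := by
    rw [map_joint μ ε hεmeas hεindep]
    have : (fun i : Fin N => μ.map (ε i)) = fun _ : Fin N =>
        (2:ℝ≥0∞)⁻¹ • Measure.dirac (1:ℝ) + (2:ℝ≥0∞)⁻¹ • Measure.dirac (-1:ℝ) :=
      funext fun i => rad_map μ (hεmeas i) (hεrad i)
    rw [this, pi_rad_eq_sum]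
  rw [h1, h2]
  have hint : ∀ σ : Fin N → Bool,
      Integrable f (((2:ℝ≥0∞) ^ N)⁻¹ • Measure.dirac (fun i : Fin N => rsgn (σ i))) := by
    intro σ
    refine Integrable.smul_measure ?_ (by simp : ((2:ℝ≥0∞) ^ N)⁻¹ ≠ ⊤)
    exact (integrable_const (f (fun i => rsgn (σ i)))).congr (ae_eq_dirac f).symm
  rw [integral_finset_sum_measure fun σ _ => hint σ]
  rw [Finset.mul_sum]
  refine Finset.sum_congr rfl fun σ _ => ?_
  rw [integral_smul_measure, integral_dirac]
  rw [ENNReal.toReal_inv, ENNReal.toReal_pow, ENNReal.toReal_ofNat, smul_eq_mul]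

end MeasurePart

end Stmt5Aux




/-- A Rademacher random variable: takes values `1` and `-1` with probability `1/2` each. -/
def IsRademacher {Ω : Type*} [MeasurableSpace Ω] (μ : Measure Ω) (ε : Ω → ℝ) : Prop :=
  μ {ω | ε ω = 1} = 1/2 ∧ μ {ω | ε ω = -1} = 1/2

/-- multivariate comparison for Rademacher complexity (Theorem 2.2 of the
paper), with constant `β_k = 3^k + 3^(k-1) - 2^k`.  The norm `‖·‖` on `Fin k → ℝ` is the
sup (ℓ∞) norm.  The supremum over `s ∈ T_j` of `|∑ i, ε_i M_i s_i|` is expressed as the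
supremum over `t ∈ T` of `|∑ i, ε_i M_i t_{ij}|`. -/
theorem stmt5 {Ω : Type*} [MeasurableSpace Ω] (μ : Measure Ω) [IsProbabilityMeasure μ]
    (N k : ℕ) (hk : 0 < k)
    (T : Set (Fin N → Fin k → ℝ)) (hTb : Bornology.IsBounded T) (hTne : T.Nonempty)
    (M : Fin N → ℝ) (h : Fin N → (Fin k → ℝ) → ℝ)
    (hLip : ∀ i, ∀ s t : Fin k → ℝ, |h i t - h i s| ≤ M i * ‖t - s‖)
    (h0 : ∀ i, h i 0 = 0)
    (ε : Fin N → Ω → ℝ)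
    (hεmeas : ∀ i, Measurable (ε i))
    (hεrad : ∀ i, IsRademacher μ (ε i))
    (hεindep : iIndepFun ε μ) :
    ∫ ω, (⨆ t : T, |∑ i, ε i ω * h i ((t : Fin N → Fin k → ℝ) i)|) ∂μ ≤
      ((3 : ℝ) ^ k + 3 ^ (k - 1) - 2 ^ k) *
        ∑ j : Fin k, ∫ ω, (⨆ t : T, |∑ i, ε i ω * M i *
          (t : Fin N → Fin k → ℝ) i j|) ∂μ := by
  classical
  haveI : Nonempty ↥T := hTne.to_subtype
  set T0 : Set (Fin N → Fin k → ℝ) := insert 0 T with hT0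
  haveI : Nonempty ↥T0 := ⟨⟨0, Set.mem_insert _ _⟩⟩
  set j0 : Fin k := ⟨0, hk⟩ with hj0
  -- uniform bounds
  obtain ⟨C0, hC0⟩ := (isBounded_iff_forall_norm_le).mp hTb
  set C : ℝ := max C0 0 with hC
  have hCnn : 0 ≤ C := le_max_right _ _
  have hnorm : ∀ t ∈ T0, ‖t‖ ≤ C := by
    rintro t (rfl | ht)
    · simpa using hCnn
    · exact le_trans (hC0 t ht) (le_max_left _ _)
  have hnormi : ∀ t ∈ T0, ∀ i : Fin N, ‖t i‖ ≤ C :=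
    fun t ht i => le_trans (norm_le_pi_norm t i) (hnorm t ht)
  have hcoord : ∀ t ∈ T0, ∀ (i : Fin N) (j : Fin k), |t i j| ≤ C := by
    intro t ht i j
    calc |t i j| = ‖t i j‖ := (Real.norm_eq_abs _).symm
      _ ≤ ‖t i‖ := norm_le_pi_norm (t i) j
      _ ≤ C := hnormi t ht i
  have habsh : ∀ (i : Fin N) (x : Fin k → ℝ), |h i x| ≤ M i * ‖x‖ := by
    intro i x
    have := hLip i 0 x
    simpa [h0 i] using this
  set K : ℝ := (∑ i, |M i|) * C with hK
  have hMsum : ∀ i : Fin N, |M i| ≤ ∑ i', |M i'| :=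
    fun i => Finset.single_le_sum (fun i' _ => abs_nonneg (M i')) (Finset.mem_univ i)
  have hKh : ∀ i : Fin N, ∀ t ∈ T0, |h i (t i)| ≤ K := by
    intro i t ht
    calc |h i (t i)| ≤ M i * ‖t i‖ := habsh i (t i)
      _ ≤ |M i| * C := by
          have h1 : M i * ‖t i‖ ≤ |M i| * ‖t i‖ :=
            mul_le_mul_of_nonneg_right (le_abs_self _) (norm_nonneg _)
          have h2 : |M i| * ‖t i‖ ≤ |M i| * C :=
            mul_le_mul_of_nonneg_left (hnormi t ht i) (abs_nonneg _)
          linarith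
      _ ≤ K := by
          rw [hK]
          exact mul_le_mul_of_nonneg_right (hMsum i) hCnn
  have hKM : ∀ (i : Fin N) (j : Fin k), ∀ t ∈ T0, |M i * t i j| ≤ K := by
    intro i j t ht
    calc |M i * t i j| = |M i| * |t i j| := abs_mul _ _
      _ ≤ |M i| * C := mul_le_mul_of_nonneg_left (hcoord t ht i j) (abs_nonneg _)
      _ ≤ K := by
          rw [hK]
          exact mul_le_mul_of_nonneg_right (hMsum i) hCnn
  have hcomp : ∀ (i : Fin N), ∀ s ∈ T0, ∀ t ∈ T0,
      ∃ j, h i (s i) - h i (t i) ≤ |M i * s i j - M i * t i j| := by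
    intro i s hs t ht
    obtain ⟨js, -, hjs⟩ := Finset.exists_max_image Finset.univ
      (fun j => |s i j - t i j|) ⟨j0, Finset.mem_univ _⟩
    refine ⟨js, ?_⟩
    have h1 : h i (s i) - h i (t i) ≤ |h i (s i) - h i (t i)| := le_abs_self _
    have h2 : |h i (s i) - h i (t i)| ≤ M i * ‖s i - t i‖ := hLip i (t i) (s i)
    have h3 : ‖s i - t i‖ ≤ |s i js - t i js| := by
      rw [pi_norm_le_iff_of_nonneg (abs_nonneg _)]
      intro j
      rw [Real.norm_eq_abs]
      exact hjs j (Finset.mem_univ _)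
    have h4 : M i * ‖s i - t i‖ ≤ |M i| * |s i js - t i js| := by
      have ha : M i * ‖s i - t i‖ ≤ |M i| * ‖s i - t i‖ :=
        mul_le_mul_of_nonneg_right (le_abs_self _) (norm_nonneg _)
      have hb : |M i| * ‖s i - t i‖ ≤ |M i| * |s i js - t i js| :=
        mul_le_mul_of_nonneg_left h3 (abs_nonneg _)
      linarith
    have h5 : |M i| * |s i js - t i js| = |M i * s i js - M i * t i js| := by
      rw [← abs_mul, mul_sub]
    linarith
  -- boundedness facts
  have habsSh : ∀ (σ : Fin N → Bool), ∀ t ∈ T0,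
      |∑ i, rsgn (σ i) * h i (t i)| ≤ ∑ _i : Fin N, K := by
    intro σ t ht
    calc |∑ i, rsgn (σ i) * h i (t i)| ≤ ∑ i, |rsgn (σ i) * h i (t i)| :=
          Finset.abs_sum_le_sum_abs _ _
      _ ≤ ∑ _i : Fin N, K := by
          refine Finset.sum_le_sum fun i _ => ?_
          rw [abs_mul, abs_rsgn, one_mul]
          exact hKh i t ht
  have habsSM : ∀ (j : Fin k) (σ : Fin N → Bool), ∀ t ∈ T0,
      |∑ i, rsgn (σ i) * (M i * t i j)| ≤ ∑ _i : Fin N, K := by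
    intro j σ t ht
    calc |∑ i, rsgn (σ i) * (M i * t i j)| ≤ ∑ i, |rsgn (σ i) * (M i * t i j)| :=
          Finset.abs_sum_le_sum_abs _ _
      _ ≤ ∑ _i : Fin N, K := by
          refine Finset.sum_le_sum fun i _ => ?_
          rw [abs_mul, abs_rsgn, one_mul]
          exact hKM i j t ht
  -- discrete quantities
  set L : ℝ := ∑ σ : Fin N → Bool, ⨆ t : ↥T, |∑ i, rsgn (σ i) * h i (t.1 i)| with hLdef
  set Bq : Fin k → ℝ :=
    fun j => ∑ σ : Fin N → Bool, ⨆ t : ↥T, |∑ i, rsgn (σ i) * (M i * t.1 i j)| with hBdef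
  set V : ℝ := ∑ σ : Fin N → Bool, ⨆ t : ↥T0, (∑ i, rsgn (σ i) * h i (t.1 i)) with hVdef
  set U : Fin k → ℝ :=
    fun j => ∑ σ : Fin N → Bool, ⨆ t : ↥T0, (∑ i, rsgn (σ i) * (M i * t.1 i j)) with hUdef
  -- (1) L ≤ 2 V
  have hbd1 : ∀ σ : Fin N → Bool,
      BddAbove (Set.range fun t : ↥T0 => ∑ i, rsgn (σ i) * h i (t.1 i)) :=
    fun σ => bdd_range_of_le fun t => le_trans (le_abs_self _) (habsSh σ t.1 t.2)
  have hbd2 : ∀ σ : Fin N → Bool,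
      BddAbove (Set.range fun t : ↥T0 => -∑ i, rsgn (σ i) * h i (t.1 i)) :=
    fun σ => bdd_range_of_le fun t =>
      le_trans (neg_le_abs _) (habsSh σ t.1 t.2)
  have hbdabs : ∀ σ : Fin N → Bool,
      BddAbove (Set.range fun t : ↥T => |∑ i, rsgn (σ i) * h i (t.1 i)|) :=
    fun σ => bdd_range_of_le fun t => habsSh σ t.1 (Set.mem_insert_of_mem _ t.2)
  have hbdM : ∀ (j : Fin k) (σ : Fin N → Bool),
      BddAbove (Set.range fun t : ↥T0 => ∑ i, rsgn (σ i) * (M i * t.1 i j)) :=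
    fun j σ => bdd_range_of_le fun t => le_trans (le_abs_self _) (habsSM j σ t.1 t.2)
  have hbdMabs : ∀ (j : Fin k) (σ : Fin N → Bool),
      BddAbove (Set.range fun t : ↥T => |∑ i, rsgn (σ i) * (M i * t.1 i j)|) :=
    fun j σ => bdd_range_of_le fun t => habsSM j σ t.1 (Set.mem_insert_of_mem _ t.2)
  have hzero : ∀ σ : Fin N → Bool, ∑ i, rsgn (σ i) * h i ((0 : Fin N → Fin k → ℝ) i) = 0 := by
    intro σ
    refine Finset.sum_eq_zero fun i _ => ?_
    show rsgn (σ i) * h i 0 = 0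
    rw [h0 i, mul_zero]
  have hL2V : L ≤ 2 * V := by
    have step1 : ∀ σ : Fin N → Bool,
        (⨆ t : ↥T, |∑ i, rsgn (σ i) * h i (t.1 i)|)
          ≤ (⨆ t : ↥T0, (∑ i, rsgn (σ i) * h i (t.1 i)))
            + (⨆ t : ↥T0, -(∑ i, rsgn (σ i) * h i (t.1 i))) := by
      intro σ
      exact sup_abs_le T 0 (fun t => ∑ i, rsgn (σ i) * h i (t i)) (hzero σ) (hbd1 σ) (hbd2 σ)
    have hflip : ∑ σ : Fin N → Bool, (⨆ t : ↥T0, -(∑ i, rsgn (σ i) * h i (t.1 i))) = V := by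
      rw [hVdef]
      rw [← sum_bool_flip (fun σ => ⨆ t : ↥T0, (∑ i, rsgn (σ i) * h i (t.1 i)))]
      refine Finset.sum_congr rfl fun σ _ => ?_
      refine congrArg _ (funext fun t => ?_)
      rw [← Finset.sum_neg_distrib]
      exact Finset.sum_congr rfl fun i _ => by rw [rsgn_not, neg_mul]
    calc L ≤ ∑ σ : Fin N → Bool,
          ((⨆ t : ↥T0, (∑ i, rsgn (σ i) * h i (t.1 i)))
            + (⨆ t : ↥T0, -(∑ i, rsgn (σ i) * h i (t.1 i)))) := by
          rw [hLdef]
          exact Finset.sum_le_sum fun σ _ => step1 σ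
      _ = V + ∑ σ : Fin N → Bool, (⨆ t : ↥T0, -(∑ i, rsgn (σ i) * h i (t.1 i))) := by
          rw [Finset.sum_add_distrib, hVdef]
      _ = 2 * V := by rw [hflip]; ring
  -- (2) hybrid gives 2^((k-1)*N) * V ≤ ∑ j, 2^((k-1)*N) * U j
  have hhyb := hybrid hk T0 M h K hKh hKM hcomp
  have hmargV : ∑ τ : Fin N → Fin k → Bool,
      ⨆ t : ↥T0, (∑ i, rsgn (τ i j0) * h i (t.1 i)) = 2 ^ ((k-1)*N) * V := by
    rw [hVdef]
    exact marg j0 (fun σ => ⨆ t : ↥T0, (∑ i, rsgn (σ i) * h i (t.1 i)))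
  have hsplitRHS : ∑ τ : Fin N → Fin k → Bool,
      (⨆ t : ↥T0, (∑ i, ∑ j, rsgn (τ i j) * (M i * t.1 i j)))
        ≤ ∑ j : Fin k, 2 ^ ((k-1)*N) * U j := by
    have hper : ∀ τ : Fin N → Fin k → Bool,
        (⨆ t : ↥T0, (∑ i, ∑ j, rsgn (τ i j) * (M i * t.1 i j)))
          ≤ ∑ j : Fin k, ⨆ t : ↥T0, (∑ i, rsgn (τ i j) * (M i * t.1 i j)) := by
      intro τ
      have hcommm : (⨆ t : ↥T0, (∑ i, ∑ j, rsgn (τ i j) * (M i * t.1 i j)))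
          = ⨆ t : ↥T0, (∑ j, ∑ i, rsgn (τ i j) * (M i * t.1 i j)) :=
        congrArg _ (funext fun t => Finset.sum_comm)
      rw [hcommm]
      refine iSup_finset_sum_le Finset.univ
        (fun j (t : ↥T0) => ∑ i, rsgn (τ i j) * (M i * t.1 i j)) ?_
      intro j
      exact bdd_range_of_le fun t =>
        le_trans (le_abs_self _) (habsSM j (fun i => τ i j) t.1 t.2)
    calc ∑ τ : Fin N → Fin k → Bool,
          (⨆ t : ↥T0, (∑ i, ∑ j, rsgn (τ i j) * (M i * t.1 i j)))
        ≤ ∑ τ : Fin N → Fin k → Bool,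
          ∑ j : Fin k, ⨆ t : ↥T0, (∑ i, rsgn (τ i j) * (M i * t.1 i j)) :=
          Finset.sum_le_sum fun τ _ => hper τ
      _ = ∑ j : Fin k, ∑ τ : Fin N → Fin k → Bool,
          ⨆ t : ↥T0, (∑ i, rsgn (τ i j) * (M i * t.1 i j)) := Finset.sum_comm
      _ = ∑ j : Fin k, 2 ^ ((k-1)*N) * U j := by
          refine Finset.sum_congr rfl fun j _ => ?_
          rw [hUdef]
          exact marg j (fun σ => ⨆ t : ↥T0, (∑ i, rsgn (σ i) * (M i * t.1 i j)))
  have hVU : V ≤ ∑ j : Fin k, U j := by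
    have hpow : (0:ℝ) < 2 ^ ((k-1)*N) := by positivity
    have hstep : 2 ^ ((k-1)*N) * V ≤ ∑ j : Fin k, 2 ^ ((k-1)*N) * U j := by
      calc 2 ^ ((k-1)*N) * V
          = ∑ τ : Fin N → Fin k → Bool, ⨆ t : ↥T0, (∑ i, rsgn (τ i j0) * h i (t.1 i)) :=
            hmargV.symm
        _ ≤ ∑ τ : Fin N → Fin k → Bool,
            (⨆ t : ↥T0, (∑ i, ∑ j, rsgn (τ i j) * (M i * t.1 i j))) := hhyb
        _ ≤ ∑ j : Fin k, 2 ^ ((k-1)*N) * U j := hsplitRHS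
    have hstep2 : 2 ^ ((k-1)*N) * V ≤ 2 ^ ((k-1)*N) * ∑ j : Fin k, U j :=
      le_trans hstep (le_of_eq (Finset.mul_sum _ _ _).symm)
    exact le_of_mul_le_mul_left hstep2 hpow
  -- (3) U j ≤ Bq j
  have hUB : ∀ j : Fin k, U j ≤ Bq j := by
    intro j
    rw [hUdef, hBdef]
    refine Finset.sum_le_sum fun σ _ => ?_
    refine sup_insert_le_sup_abs T 0 (fun t => ∑ i, rsgn (σ i) * (M i * t i j)) ?_ (hbdMabs j σ)
    refine Finset.sum_eq_zero fun i _ => ?_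
    show rsgn (σ i) * (M i * (0:Fin N → Fin k → ℝ) i j) = 0
    simp
  have hLB : L ≤ 2 * ∑ j : Fin k, Bq j := by
    calc L ≤ 2 * V := hL2V
      _ ≤ 2 * ∑ j : Fin k, U j := by linarith [hVU]
      _ ≤ 2 * ∑ j : Fin k, Bq j := by
          have := Finset.sum_le_sum fun j (_ : j ∈ Finset.univ) => hUB j
          linarith [this]
  -- (4) integrals
  have hεrad' : ∀ i, μ {ω | ε i ω = 1} = 1/2 ∧ μ {ω | ε i ω = -1} = 1/2 := fun i => hεrad i
  have hintL : ∫ ω, (⨆ t : T, |∑ i, ε i ω * h i ((t : Fin N → Fin k → ℝ) i)|) ∂μ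
      = ((2:ℝ) ^ N)⁻¹ * L := by
    have hmeas : Measurable fun x : Fin N → ℝ => ⨆ t : ↥T, |∑ i, x i * h i (t.1 i)| :=
      meas_sup T (fun i t => h i (t i)) K
        (fun i t ht => hKh i t (Set.mem_insert_of_mem _ ht))
    have := key_avg μ ε hεmeas hεrad' hεindep
      (fun x => ⨆ t : ↥T, |∑ i, x i * h i (t.1 i)|) hmeas
    rw [hLdef]
    exact this
  have hintB : ∀ j : Fin k,
      ∫ ω, (⨆ t : T, |∑ i, ε i ω * (M i * (t : Fin N → Fin k → ℝ) i j)|) ∂μ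
        = ((2:ℝ) ^ N)⁻¹ * Bq j := by
    intro j
    have hmeas : Measurable fun x : Fin N → ℝ => ⨆ t : ↥T, |∑ i, x i * (M i * t.1 i j)| :=
      meas_sup T (fun i t => M i * t i j) K
        (fun i t ht => hKM i j t (Set.mem_insert_of_mem _ ht))
    have := key_avg μ ε hεmeas hεrad' hεindep
      (fun x => ⨆ t : ↥T, |∑ i, x i * (M i * t.1 i j)|) hmeas
    rw [hBdef]
    exact this
  -- numeric facts
  have hBnn : ∀ j : Fin k, 0 ≤ Bq j := by
    intro j
    rw [hBdef]
    refine Finset.sum_nonneg fun σ _ => ?_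
    obtain ⟨t1⟩ := (inferInstance : Nonempty ↥T)
    exact le_trans (abs_nonneg _) (le_ciSup (hbdMabs j σ) t1)
  have hβ : 2 ≤ (3:ℝ) ^ k + 3 ^ (k-1) - 2 ^ k := by
    obtain ⟨m, rfl⟩ : ∃ m, k = m + 1 := ⟨k - 1, (Nat.succ_pred_eq_of_pos hk).symm⟩
    have h1 : (2:ℝ) ^ m ≤ 3 ^ m := pow_le_pow_left₀ (by norm_num) (by norm_num) m
    have h2 : (1:ℝ) ≤ 2 ^ m := by
      rw [← one_pow m]
      exact pow_le_pow_left₀ (by norm_num) (by norm_num) m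
    rw [show m + 1 - 1 = m from rfl, pow_succ, pow_succ]
    nlinarith
  -- conclusion
  have hgoal : ∫ ω, (⨆ t : T, |∑ i, ε i ω * h i ((t : Fin N → Fin k → ℝ) i)|) ∂μ
      ≤ ((3 : ℝ) ^ k + 3 ^ (k - 1) - 2 ^ k) *
        ∑ j : Fin k, ∫ ω, (⨆ t : T, |∑ i, ε i ω * (M i * (t : Fin N → Fin k → ℝ) i j)|) ∂μ := by
    rw [hintL]
    have hrw : ∑ j : Fin k, ∫ ω, (⨆ t : T, |∑ i, ε i ω *
        (M i * (t : Fin N → Fin k → ℝ) i j)|) ∂μ = ∑ j : Fin k, ((2:ℝ)^N)⁻¹ * Bq j :=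
      Finset.sum_congr rfl fun j _ => hintB j
    rw [hrw]
    have hinv : (0:ℝ) ≤ ((2:ℝ)^N)⁻¹ := by positivity
    have hsum : ∑ j : Fin k, ((2:ℝ)^N)⁻¹ * Bq j = ((2:ℝ)^N)⁻¹ * ∑ j : Fin k, Bq j := by
      rw [Finset.mul_sum]
    rw [hsum]
    have hBsum : 0 ≤ ∑ j : Fin k, Bq j := Finset.sum_nonneg fun j _ => hBnn j
    calc ((2:ℝ)^N)⁻¹ * L ≤ ((2:ℝ)^N)⁻¹ * (2 * ∑ j : Fin k, Bq j) :=
          mul_le_mul_of_nonneg_left hLB hinv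
      _ ≤ ((2:ℝ)^N)⁻¹ * (((3 : ℝ) ^ k + 3 ^ (k - 1) - 2 ^ k) * ∑ j : Fin k, Bq j) := by
          refine mul_le_mul_of_nonneg_left ?_ hinv
          exact mul_le_mul_of_nonneg_right hβ hBsum
      _ = ((3 : ℝ) ^ k + 3 ^ (k - 1) - 2 ^ k) * (((2:ℝ)^N)⁻¹ * ∑ j : Fin k, Bq j) := by ring
  simpa only [mul_assoc] using hgoal
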